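/- Let k ≥ 2 be an integer, σ > 0, b ≥ 0, D_k > 0, and C_k > 0 be reals. Let the higher-priority tasks be partitioned into hp_1 (those with period T_i < D_k) and hp_2 (those with T_i ≥ D_k), each task having period T_i > 0, execution time C_i > 0, and utilization U_i = C_i/T_i. Set C_k' = C_k + Σ_{τ_i ∈ hp_2} σ·(1+b)·C_i. If (C_k'/D_k + (1+b))·∏_{τ_i ∈ hp_1}(σ·U_i + 1) ≤ 2 + b, then there exists t with 0 < t ≤ D_k such that C_k + Σ_{τ_i ∈ hp_1 ∪ hp_2} σ·(⌈t/T_i⌉·C_i + b·C_i) ≤ t. -/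

import Mathlib

open Finset

lemma kaux {ι : Type*} [DecidableEq ι] (b A : ℝ) (u e x : ι → ℝ) :
    ∀ s : Finset ι, (∀ i ∈ s, 0 < u i) → (∀ i ∈ s, 0 ≤ e i) →
      (∀ i ∈ s, e i ≤ u i * x i) →
      (∀ j ∈ s, x j ≤ A + ∑ i ∈ s.filter (fun i => x i < x j), e i) →
      (∏ i ∈ s, (1 + u i)) ≤ 2 + b →
      (∏ i ∈ s, (1 + u i)) * (∑ i ∈ s, u i * x i) +
        (2 + b - ∏ i ∈ s, (1 + u i)) * (∑ i ∈ s, e i) ≤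
        (2 + b) * A * ((∏ i ∈ s, (1 + u i)) - 1) := by
  intro s
  induction s using Finset.strongInduction with
  | _ s ih =>
    intro hu he hex hcon hP
    rcases Finset.eq_empty_or_nonempty s with rfl | hne
    · simp
    obtain ⟨m, hm, hmax⟩ := Finset.exists_max_image s x hne
    have hss : s.erase m ⊂ s := Finset.erase_ssubset hm
    have hP'1 : (1:ℝ) ≤ ∏ i ∈ s.erase m, (1 + u i) := by
      have h := Finset.prod_le_prod (s := s.erase m) (f := fun _ => (1:ℝ))
        (g := fun i => 1 + u i) (fun i _ => by norm_num)
        (fun i hi => by linarith [hu i (Finset.mem_of_mem_erase hi)])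
      simpa using h
    have hum : 0 < u m := hu m hm
    have hprod : ∏ i ∈ s, (1 + u i) = (1 + u m) * ∏ i ∈ s.erase m, (1 + u i) :=
      (Finset.mul_prod_erase s _ hm).symm
    have hE' : 0 ≤ ∑ i ∈ s.erase m, e i :=
      Finset.sum_nonneg fun i hi => he i (Finset.mem_of_mem_erase hi)
    have hPle2 : (1 + u m) * ∏ i ∈ s.erase m, (1 + u i) ≤ 2 + b := by
      rw [← hprod]; exact hP
    have hP'le : (∏ i ∈ s.erase m, (1 + u i)) ≤ 2 + b := by nlinarith
    have hconm : x m ≤ A + ∑ i ∈ s.erase m, e i := by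
      refine (hcon m hm).trans (add_le_add (le_refl A) ?_)
      refine Finset.sum_le_sum_of_subset_of_nonneg ?_ fun i hi _ => he i (Finset.mem_of_mem_erase hi)
      intro i hif
      have h' := Finset.mem_filter.mp hif
      refine Finset.mem_erase.mpr ⟨?_, h'.1⟩
      rintro rfl
      exact absurd h'.2 (lt_irrefl _)
    have hcon' : ∀ j ∈ s.erase m, x j ≤ A + ∑ i ∈ (s.erase m).filter (fun i => x i < x j), e i := by
      intro j hj
      have hjs := Finset.mem_of_mem_erase hj
      have hfe : s.filter (fun i => x i < x j) = (s.erase m).filter (fun i => x i < x j) := by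
        ext i
        simp only [Finset.mem_filter, Finset.mem_erase]
        constructor
        · rintro ⟨his, hlt⟩
          refine ⟨⟨?_, his⟩, hlt⟩
          rintro rfl
          exact absurd hlt (not_lt.mpr (hmax j hjs))
        · rintro ⟨⟨_, his⟩, hlt⟩; exact ⟨his, hlt⟩
      rw [← hfe]; exact hcon j hjs
    have ihh := ih (s.erase m) hss (fun i hi => hu i (Finset.mem_of_mem_erase hi))
      (fun i hi => he i (Finset.mem_of_mem_erase hi))
      (fun i hi => hex i (Finset.mem_of_mem_erase hi)) hcon' hP'le
    have hsum1 : ∑ i ∈ s, u i * x i = u m * x m + ∑ i ∈ s.erase m, u i * x i :=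
      (Finset.add_sum_erase s _ hm).symm
    have hsum2 : ∑ i ∈ s, e i = e m + ∑ i ∈ s.erase m, e i :=
      (Finset.add_sum_erase s _ hm).symm
    rw [hprod, hsum1, hsum2]
    have hs2 : e m ≤ u m * (A + ∑ i ∈ s.erase m, e i) := (hex m hm).trans (by nlinarith)
    set P' := ∏ i ∈ s.erase m, (1 + u i) with hP'def
    set L' := ∑ i ∈ s.erase m, u i * x i with hL'def
    set E' := ∑ i ∈ s.erase m, e i with hE'def
    have t1 : 0 ≤ (1 + u m) * ((2+b)*A*(P' - 1) - (P' * L' + (2+b-P') * E')) :=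
      mul_nonneg (by linarith) (by linarith)
    have t2 : 0 ≤ (2+b-(1+u m)*P') * (u m * (A + E') - e m) :=
      mul_nonneg (by linarith) (by linarith)
    have t3 : 0 ≤ ((1+u m)*P'*u m) * ((A + E') - x m) :=
      mul_nonneg (mul_nonneg (mul_nonneg (by linarith : (0:ℝ) ≤ 1 + u m)
        (by linarith : (0:ℝ) ≤ P')) hum.le) (by linarith)
    have key : (2+b)*A*((1+u m)*P' - 1) -
        ((1+u m)*P' * (u m * x m + L') + (2+b - (1+u m)*P') * (e m + E'))
      = (1+u m) * ((2+b)*A*(P' - 1) - (P' * L' + (2+b-P') * E'))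
        + (2+b-(1+u m)*P') * (u m * (A + E') - e m)
        + ((1+u m)*P'*u m) * ((A + E') - x m) := by ring
    linarith [t1, t2, t3, key]


theorem constant_inflation_hyperbolic_test
    {ι : Type*} [DecidableEq ι]
    (k : ℕ) (hk : 2 ≤ k) (σ b Dk Ck : ℝ)
    (hσ : 0 < σ) (hb : 0 ≤ b) (hDk : 0 < Dk) (hCk : 0 < Ck)
    (hp1 hp2 : Finset ι) (hdisj : Disjoint hp1 hp2)
    (hcard : hp1.card + hp2.card = k - 1)
    (T C U : ι → ℝ)
    (hT : ∀ i ∈ hp1 ∪ hp2, 0 < T i)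
    (hC : ∀ i ∈ hp1 ∪ hp2, 0 < C i)
    (hU : ∀ i ∈ hp1 ∪ hp2, U i = C i / T i)
    (h1 : ∀ i ∈ hp1, T i < Dk)
    (h2 : ∀ i ∈ hp2, Dk ≤ T i)
    (Ck' : ℝ) (hCk' : Ck' = Ck + ∑ i ∈ hp2, σ * (1 + b) * C i)
    (hcond : (Ck' / Dk + (1 + b)) * ∏ i ∈ hp1, (σ * U i + 1) ≤ 2 + b) :
    ∃ t : ℝ, 0 < t ∧ t ≤ Dk ∧
      Ck + ∑ i ∈ hp1 ∪ hp2, σ * ((⌈t / T i⌉ : ℝ) * C i + b * C i) ≤ t := by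
  by_contra hcontra
  push_neg at hcontra
  -- basic facts
  have hT1 : ∀ i ∈ hp1, 0 < T i := fun i hi => hT i (Finset.mem_union_left _ hi)
  have hC1 : ∀ i ∈ hp1, 0 < C i := fun i hi => hC i (Finset.mem_union_left _ hi)
  -- the inflated execution / utilization / last-arrival functions
  set u : ι → ℝ := fun i => σ * C i / T i with hu_def
  set e : ι → ℝ := fun i => σ * C i with he_def
  set x : ι → ℝ := fun i => T i * ((⌈Dk / T i⌉ : ℝ) - 1) with hx_def
  have hupos : ∀ i ∈ hp1, 0 < u i := fun i hi => by
    simp only [hu_def]; exact div_pos (mul_pos hσ (hC1 i hi)) (hT1 i hi)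
  have henn : ∀ i ∈ hp1, 0 ≤ e i := fun i hi => by
    simp only [he_def]; exact (mul_pos hσ (hC1 i hi)).le
  have hn2 : ∀ i ∈ hp1, (2:ℤ) ≤ ⌈Dk / T i⌉ := by
    intro i hi
    have ha : (1:ℝ) < Dk / T i := (one_lt_div (hT1 i hi)).mpr (h1 i hi)
    have := Int.lt_ceil.mpr (by exact_mod_cast ha : ((1:ℤ):ℝ) < Dk / T i)
    omega
  have hn2R : ∀ i ∈ hp1, (2:ℝ) ≤ (⌈Dk / T i⌉ : ℝ) := fun i hi => by
    exact_mod_cast hn2 i hi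
  have hxT : ∀ i ∈ hp1, T i ≤ x i := by
    intro i hi
    have h := hn2R i hi
    have hTi := hT1 i hi
    simp only [hx_def]
    nlinarith
  have hx0 : ∀ i ∈ hp1, 0 < x i := fun i hi => lt_of_lt_of_le (hT1 i hi) (hxT i hi)
  have hxD : ∀ i ∈ hp1, x i < Dk := by
    intro i hi
    have hc := Int.ceil_lt_add_one (Dk / T i)
    have hTi := hT1 i hi
    have h3 : (⌈Dk / T i⌉ : ℝ) - 1 < Dk / T i := by linarith
    have h4 := mul_lt_mul_of_pos_left h3 hTi
    have h5 : T i * (Dk / T i) = Dk := by field_simp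
    simp only [hx_def]
    linarith
  have hux : ∀ i ∈ hp1, u i * x i = σ * C i * ((⌈Dk / T i⌉ : ℝ) - 1) := by
    intro i hi
    have hTi := (hT1 i hi).ne'
    simp only [hu_def, hx_def]
    field_simp
  have heux : ∀ i ∈ hp1, e i ≤ u i * x i := by
    intro i hi
    rw [hux i hi]
    simp only [he_def]
    nlinarith [hn2R i hi, mul_pos hσ (hC1 i hi)]
  have hceil_le : ∀ i ∈ hp1, ∀ t : ℝ, t ≤ Dk → (⌈t / T i⌉ : ℝ) ≤ (⌈Dk / T i⌉ : ℝ) := by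
    intro i hi t ht
    have : t / T i ≤ Dk / T i := by
      have h0 := hT1 i hi
      gcongr
    exact_mod_cast Int.ceil_le_ceil this
  have hceil_le2 : ∀ i ∈ hp1, ∀ t : ℝ, t ≤ x i → (⌈t / T i⌉ : ℝ) ≤ (⌈Dk / T i⌉ : ℝ) - 1 := by
    intro i hi t ht
    have hTi := hT1 i hi
    have hxv : x i = ((⌈Dk / T i⌉ : ℝ) - 1) * T i := by simp only [hx_def]; ring
    have ha : t / T i ≤ (⌈Dk / T i⌉ : ℝ) - 1 := by
      rw [div_le_iff₀ hTi]; linarith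
    have h2' : ⌈t / T i⌉ ≤ ⌈Dk / T i⌉ - 1 := Int.ceil_le.mpr (by push_cast; linarith)
    have : ((⌈t / T i⌉ : ℤ) : ℝ) ≤ ((⌈Dk / T i⌉ - 1 : ℤ) : ℝ) := by exact_mod_cast h2'
    push_cast at this
    linarith
  -- reduced unschedulability hypothesis
  have hG : ∀ t : ℝ, 0 < t → t ≤ Dk →
      t < Ck' + ∑ i ∈ hp1, σ * ((⌈t / T i⌉ : ℝ) * C i + b * C i) := by
    intro t ht htD
    have h := hcontra t ht htD
    rw [Finset.sum_union hdisj] at h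
    have h2sum : ∑ i ∈ hp2, σ * ((⌈t / T i⌉ : ℝ) * C i + b * C i)
        = ∑ i ∈ hp2, σ * (1 + b) * C i := by
      refine Finset.sum_congr rfl (fun i hi => ?_)
      have hTi : 0 < T i := hT i (Finset.mem_union_right _ hi)
      have hle : t / T i ≤ 1 := (div_le_one hTi).mpr (le_trans htD (h2 i hi))
      have hpos : 0 < t / T i := div_pos ht hTi
      have hceil : ⌈t / T i⌉ = 1 := by
        have ha : ⌈t / T i⌉ ≤ 1 := Int.ceil_le.mpr (by push_cast; linarith)
        have hb' : 0 < ⌈t / T i⌉ := Int.ceil_pos.mpr hpos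
        omega
      rw [hceil]
      push_cast
      ring
    rw [h2sum] at h
    rw [hCk']
    linarith
  -- the two families of constraints
  have hDkE : Dk < (Ck' + (∑ i ∈ hp1, u i * x i) + b * ∑ i ∈ hp1, e i) + ∑ i ∈ hp1, e i := by
    have h := hG Dk hDk le_rfl
    have heq : ∀ i ∈ hp1, σ * ((⌈Dk / T i⌉ : ℝ) * C i + b * C i)
        = u i * x i + e i + b * e i := by
      intro i hi
      rw [hux i hi]
      simp only [he_def]
      ring
    rw [Finset.sum_congr rfl heq] at h
    have e1 : ∑ i ∈ hp1, (u i * x i + e i + b * e i)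
        = (∑ i ∈ hp1, u i * x i) + (∑ i ∈ hp1, e i) + b * ∑ i ∈ hp1, e i := by
      rw [Finset.mul_sum, ← Finset.sum_add_distrib, ← Finset.sum_add_distrib]
    rw [e1] at h
    linarith
  have hcon : ∀ j ∈ hp1, x j ≤ (Ck' + (∑ i ∈ hp1, u i * x i) + b * ∑ i ∈ hp1, e i)
      + ∑ i ∈ hp1.filter (fun i => x i < x j), e i := by
    intro j hj
    have h := hG (x j) (hx0 j hj) (hxD j hj).le
    have hbnd : ∑ i ∈ hp1, σ * ((⌈x j / T i⌉ : ℝ) * C i + b * C i)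
        ≤ ∑ i ∈ hp1, (u i * x i + b * e i + if x i < x j then e i else 0) := by
      refine Finset.sum_le_sum (fun i hi => ?_)
      have hpc := mul_pos hσ (hC1 i hi)
      rw [hux i hi]
      simp only [he_def]
      by_cases hij : x i < x j
      · rw [if_pos hij]
        have hcl := hceil_le i hi (x j) (hxD j hj).le
        nlinarith [mul_nonneg (sub_nonneg.mpr hcl) hpc.le]
      · rw [if_neg hij]
        have hcl := hceil_le2 i hi (x j) (not_lt.mp hij)
        nlinarith [mul_nonneg (sub_nonneg.mpr hcl) hpc.le]
    have e2 : ∑ i ∈ hp1, (u i * x i + b * e i + if x i < x j then e i else 0)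
        = (∑ i ∈ hp1, u i * x i) + b * (∑ i ∈ hp1, e i)
          + ∑ i ∈ hp1.filter (fun i => x i < x j), e i := by
      rw [Finset.mul_sum, Finset.sum_filter, ← Finset.sum_add_distrib, ← Finset.sum_add_distrib]
    rw [e2] at hbnd
    linarith
  -- apply the key lemma
  have hP_eq : ∏ i ∈ hp1, (σ * U i + 1) = ∏ i ∈ hp1, (1 + u i) := by
    refine Finset.prod_congr rfl (fun i hi => ?_)
    rw [hU i (Finset.mem_union_left _ hi)]
    simp only [hu_def]
    ring
  rw [hP_eq] at hcond
  have hCk'0 : 0 < Ck' := by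
    rw [hCk']
    have : 0 ≤ ∑ i ∈ hp2, σ * (1 + b) * C i :=
      Finset.sum_nonneg fun i hi =>
        mul_nonneg (mul_nonneg hσ.le (by linarith)) (hC i (Finset.mem_union_right _ hi)).le
    linarith
  have hP1 : (1:ℝ) ≤ ∏ i ∈ hp1, (1 + u i) := by
    have h := Finset.prod_le_prod (s := hp1) (f := fun _ => (1:ℝ)) (g := fun i => 1 + u i)
      (fun i _ => by norm_num) (fun i hi => by linarith [hupos i hi])
    simpa using h
  have hPpos : (0:ℝ) < ∏ i ∈ hp1, (1 + u i) := lt_of_lt_of_le one_pos hP1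
  have hPb : (1 + b) * ∏ i ∈ hp1, (1 + u i) ≤ 2 + b := by
    nlinarith [mul_pos (div_pos hCk'0 hDk) hPpos]
  have hPle : ∏ i ∈ hp1, (1 + u i) ≤ 2 + b := by nlinarith
  have hK := kaux b (Ck' + (∑ i ∈ hp1, u i * x i) + b * ∑ i ∈ hp1, e i) u e x hp1
    hupos henn heux hcon hPle
  -- final contradiction
  set P := ∏ i ∈ hp1, (1 + u i) with hP_def
  set S := ∑ i ∈ hp1, u i * x i with hS_def
  set E := ∑ i ∈ hp1, e i with hE_def
  -- hK : P * S + (2+b-P)*E ≤ (2+b)*(Ck'+S+b*E)*(P-1)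
  have hX : (2 + b) * Dk < (Ck' + (1 + b) * Dk) * P := by
    rcases eq_or_lt_of_le hPb with heq | hlt
    · have key : (Ck' + (1 + b) * Dk) * P = Ck' * P + ((1 + b) * P) * Dk := by ring
      have h0 : ((1 + b) * P) * Dk = (2 + b) * Dk := by rw [heq]
      nlinarith [mul_pos hCk'0 hPpos]
    · have key : (Ck' + (1 + b) * Dk) * P - (2 + b) * Dk
          = (Ck' * P + ((1 + b) * P - (2 + b)) * ((Ck' + S + b * E) + E))
            + ((2 + b) - (1 + b) * P) * (((Ck' + S + b * E) + E) - Dk) := by ring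
      have key2 : Ck' * P + ((1 + b) * P - (2 + b)) * ((Ck' + S + b * E) + E)
          = (2 + b) * (Ck' + S + b * E) * (P - 1) - (P * S + (2 + b - P) * E) := by ring
      have t5 : 0 < ((2 + b) - (1 + b) * P) * (((Ck' + S + b * E) + E) - Dk) :=
        mul_pos (by linarith) (by linarith)
      linarith
  have hfin : (Ck' + (1 + b) * Dk) * P ≤ (2 + b) * Dk := by
    have h := mul_le_mul_of_nonneg_right hcond hDk.le
    have heq : (Ck' / Dk + (1 + b)) * P * Dk = (Ck' + (1 + b) * Dk) * P := by
      field_simp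
    linarith [heq ▸ h]
  linarith
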